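/- Let Q be the n×n tridiagonal integer matrix with diagonal entries -v_1,...,-v_n where each v_i ≥ 2, and off-diagonal entries 1 on the super- and sub-diagonal (all other entries 0). If x ∈ ℝ^n is a nonzero vector with Qx ≥ 0 componentwise, then x_i < 0 for every i. -/

import Mathlib

open Matrix

/-- The tridiagonal matrix with diagonal entries `-v i` and `1`'s on the
super- and sub-diagonal. -/
def triQ {n : ℕ} (v : Fin n → ℤ) : Matrix (Fin n) (Fin n) ℝ :=
  Matrix.of fun i j =>
    if i = j then -(v i : ℝ)
    else if (i : ℕ) + 1 = (j : ℕ) ∨ (j : ℕ) + 1 = (i : ℕ) then 1 else 0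

lemma triQ_mulVec {n : ℕ} (v : Fin n → ℤ) (x : Fin n → ℝ) (i : Fin n) :
    (triQ v).mulVec x i = -(v i : ℝ) * x i
      + (if h : (i : ℕ) + 1 < n then x ⟨(i : ℕ) + 1, h⟩ else 0)
      + (if _ : 0 < (i : ℕ) then x ⟨(i : ℕ) - 1, lt_of_le_of_lt (Nat.sub_le _ _) i.isLt⟩ else 0) := by
  have key : ∀ j : Fin n, triQ v i j * x j =
      (if j = i then -(v i : ℝ) * x j else 0)
      + (if (i : ℕ) + 1 = (j : ℕ) then x j else 0)
      + (if (j : ℕ) + 1 = (i : ℕ) then x j else 0) := by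
    intro j
    simp only [triQ, Matrix.of_apply]
    rcases eq_or_ne i j with rfl | hne
    · simp
    · have h1 : ¬ j = i := fun hh => hne hh.symm
      by_cases h2 : (i : ℕ) + 1 = (j : ℕ)
      · have h3 : ¬ ((j : ℕ) + 1 = (i : ℕ)) := by omega
        simp [hne, h1, h2, h3]
      · by_cases h3 : (j : ℕ) + 1 = (i : ℕ) <;> simp [hne, h1, h2, h3]
  have hsum : (triQ v).mulVec x i = ∑ j, triQ v i j * x j := rfl
  rw [hsum]
  simp only [key]
  rw [Finset.sum_add_distrib, Finset.sum_add_distrib]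
  congr 1
  · congr 1
    · rw [Finset.sum_ite_eq' Finset.univ i (fun j => -(v i : ℝ) * x j)]
      simp
    · by_cases h : (i : ℕ) + 1 < n
      · rw [dif_pos h, Finset.sum_eq_single (⟨(i : ℕ) + 1, h⟩ : Fin n)]
        · simp
        · intro b _ hb
          rw [if_neg]
          intro hc
          exact hb (Fin.ext hc.symm)
        · intro hb; exact absurd (Finset.mem_univ _) hb
      · rw [dif_neg h, Finset.sum_eq_zero]
        intro j _
        rw [if_neg]
        omega
  · by_cases h : 0 < (i : ℕ)
    · rw [dif_pos h, Finset.sum_eq_single (⟨(i : ℕ) - 1, lt_of_le_of_lt (Nat.sub_le _ _) i.isLt⟩ : Fin n)]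
      · rw [if_pos (by simp only [Fin.val_mk]; omega)]
      · intro b _ hb
        rw [if_neg]
        intro hc
        apply hb (Fin.ext ?_)
        simp
        omega
      · intro hb; exact absurd (Finset.mem_univ _) hb
    · rw [dif_neg h, Finset.sum_eq_zero]
      intro j _
      rw [if_neg]
      omega

theorem stmt2 {n : ℕ} (v : Fin n → ℤ) (hv : ∀ i, 2 ≤ v i)
    (x : Fin n → ℝ) (hx : x ≠ 0)
    (h : ∀ i, 0 ≤ (triQ v).mulVec x i) :
    ∀ i, x i < 0 := by
  intro i₀
  by_contra hi₀
  push_neg at hi₀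
  have : Nonempty (Fin n) := ⟨i₀⟩
  obtain ⟨i, hi⟩ := Finite.exists_max x
  set M := x i with hM
  have hM0 : 0 ≤ M := le_trans hi₀ (hi i₀)
  have hR : ∀ j : Fin n, (if h : (j : ℕ) + 1 < n then x ⟨(j : ℕ) + 1, h⟩ else 0) ≤ M := by
    intro j; split
    · exact hi _
    · exact hM0
  have hL : ∀ j : Fin n, (if _ : 0 < (j : ℕ) then x ⟨(j : ℕ) - 1, lt_of_le_of_lt (Nat.sub_le _ _) j.isLt⟩ else 0) ≤ M := by
    intro j; split
    · exact hi _
    · exact hM0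
  have hv2 : ∀ j : Fin n, (2 : ℝ) ≤ (v j : ℝ) := by
    intro j; exact_mod_cast hv j
  have stepR : ∀ j : Fin n, x j = M → ∀ hj1 : (j : ℕ) + 1 < n, x ⟨(j : ℕ) + 1, hj1⟩ = M := by
    intro j hj hj1
    have hq := h j
    rw [triQ_mulVec, hj, dif_pos hj1] at hq
    have := hL j
    refine le_antisymm (hi _) ?_
    nlinarith [hv2 j]
  have stepL : ∀ j : Fin n, x j = M → ∀ hj1 : 0 < (j : ℕ),
      x ⟨(j : ℕ) - 1, lt_of_le_of_lt (Nat.sub_le _ _) j.isLt⟩ = M := by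
    intro j hj hj1
    have hq := h j
    rw [triQ_mulVec, hj, dif_pos hj1] at hq
    have := hR j
    refine le_antisymm (hi _) ?_
    nlinarith [hv2 j]
  have up : ∀ k, ∀ hk : (i : ℕ) + k < n, x ⟨(i : ℕ) + k, hk⟩ = M := by
    intro k
    induction k with
    | zero =>
      intro hk; rw [hM]
      exact congrArg x (Fin.ext (by simp))
    | succ k ih =>
      intro hk
      have hk' : (i : ℕ) + k < n := by omega
      have := stepR ⟨(i : ℕ) + k, hk'⟩ (ih hk') (by show (i : ℕ) + k + 1 < n; omega)
      rw [← this]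
      exact congrArg x (Fin.ext (by simp only [Fin.val_mk]; omega))
  have down : ∀ k, k ≤ (i : ℕ) → x ⟨(i : ℕ) - k, lt_of_le_of_lt (Nat.sub_le _ _) i.isLt⟩ = M := by
    intro k
    induction k with
    | zero =>
      intro _; rw [hM]
      exact congrArg x (Fin.ext (by simp))
    | succ k ih =>
      intro hk
      have hk' : k ≤ (i : ℕ) := by omega
      have hpos : 0 < ((⟨(i : ℕ) - k, lt_of_le_of_lt (Nat.sub_le _ _) i.isLt⟩ : Fin n) : ℕ) := by
        simp only [Fin.val_mk]; omega
      have := stepL _ (ih hk') hpos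
      rw [← this]
      exact congrArg x (Fin.ext (by simp only [Fin.val_mk]; omega))
  have allM : ∀ j : Fin n, x j = M := by
    intro j
    rcases le_or_gt (i : ℕ) (j : ℕ) with hle | hlt
    · have := up ((j : ℕ) - (i : ℕ)) (by omega)
      rw [← this]; congr 1; exact Fin.ext (by simp; omega)
    · have := down ((i : ℕ) - (j : ℕ)) (by omega)
      rw [← this]; congr 1; exact Fin.ext (by simp; omega)
  have hn : 0 < n := i.pos
  have h0 := h ⟨0, hn⟩
  rw [triQ_mulVec] at h0
  have hb : ¬ (0 < ((⟨0, hn⟩ : Fin n) : ℕ)) := by simp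
  rw [dif_neg hb] at h0
  have hx0 : x ⟨0, hn⟩ = M := allM _
  have hR0 := hR ⟨0, hn⟩
  have hMle : M ≤ 0 := by nlinarith [hv2 ⟨0, hn⟩]
  have hM00 : M = 0 := le_antisymm hMle hM0
  apply hx
  funext j
  rw [allM j, hM00]; rfl
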